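/- (Theorem 3.11, a sufficient condition for Hamiltonization, Euclidean case Q̄ = ℝ^n.) Suppose the smooth vector field X on ℝ^n × ℝ^n satisfies the reduced Chaplygin equations i_X(Ω − Ξ) = dH, where Ξ is a fiber-linear semibasic two-form, and suppose f: ℝ^n → ℝ is smooth, nowhere-vanishing, and satisfies df ∧ Θ = f·Ξ, i.e. (df ∧ Θ)_z(u,v) = f(q)·Ξ_z(u,v) for all z = (q,p) and all u, v. Then the Chaplygin-rescaled vector field X_C satisfies Hamilton's equations Ω(X_C(z), v) = DH_C(z)[v] for all z and v, where H_C is the Chaplygin Hamiltonian; and consequently div(f^{n−1}X) = 0 identically, i.e. X preserves the measure f(q)^{n−1} dq dp. -/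

import Mathlib

noncomputable section

open Matrix

/-- Configuration vectors: points of `ℝⁿ`. -/
abbrev Vec (n : ℕ) : Type := Fin n → ℝ

/-- Phase space `ℝⁿ × ℝⁿ`, points `z = (q, p)`. -/
abbrev Phase (n : ℕ) : Type := Vec n × Vec n

/-- Canonical symplectic form `Ω(u,v) = ⟨u_q, v_p⟩ − ⟨u_p, v_q⟩`. -/
def Omega {n : ℕ} (u v : Phase n) : ℝ := u.1 ⬝ᵥ v.2 - u.2 ⬝ᵥ v.1

/-- Liouville one-form `Θ_z(v) = ⟨p, v_q⟩` at `z = (q,p)`. -/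
def Theta {n : ℕ} (z v : Phase n) : ℝ := z.2 ⬝ᵥ v.1

/-- Fiber scaling `Ψ_f(q,p) = (q, f(q)·p)`. -/
def Psi {n : ℕ} (f : Vec n → ℝ) (z : Phase n) : Phase n := (z.1, f z.1 • z.2)

/-- `Ψ_{1/f}`, the inverse of `Ψ_f`. -/
def PsiInv {n : ℕ} (f : Vec n → ℝ) : Phase n → Phase n := Psi fun q => (f q)⁻¹

/-- The Chaplygin-rescaled vector field
`X_C(z) := DΨ_f(Ψ_{1/f}(z))[(1/f(q))·X(Ψ_{1/f}(z))]`. -/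
def ChapRescale {n : ℕ} (f : Vec n → ℝ) (X : Phase n → Phase n) (z : Phase n) : Phase n :=
  fderiv ℝ (Psi f) (PsiInv f z) ((f z.1)⁻¹ • X (PsiInv f z))

/-- The two-form `df ∧ Θ`. -/
def dfTheta {n : ℕ} (f : Vec n → ℝ) (z u v : Phase n) : ℝ :=
  fderiv ℝ f z.1 u.1 * (z.2 ⬝ᵥ v.1) - fderiv ℝ f z.1 v.1 * (z.2 ⬝ᵥ u.1)

/-- Divergence of a vector field: `div Y (z) = trace DY(z)`. -/
def divergence {n : ℕ} (Y : Phase n → Phase n) (z : Phase n) : ℝ :=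
  LinearMap.trace ℝ (Phase n) (fderiv ℝ Y z).toLinearMap

section AuxiliaryLemmas

/-- A continuous linear functional on `ℝⁿ` is determined by its values on the
standard basis vectors. -/
lemma clm_eq_sum {n : ℕ} (L : Vec n →L[ℝ] ℝ) (v : Vec n) :
    L v = ∑ j, v j * L (Pi.single j 1) := by
  have hv : v = ∑ j, (v j) • (Pi.single j 1 : Vec n) := by
    funext k
    simp [Pi.single_apply]
  conv_lhs => rw [hv]
  rw [map_sum]
  simp [smul_eq_mul]

/-- The derivative of the fiber scaling `Ψ_g`. -/
lemma hasFDerivAt_Psi {n : ℕ} {g : Vec n → ℝ} {g' : Vec n →L[ℝ] ℝ} {w : Phase n}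
    (hg : HasFDerivAt g g' w.1) :
    HasFDerivAt (Psi g)
      ((ContinuousLinearMap.fst ℝ (Vec n) (Vec n)).prod
        (g w.1 • ContinuousLinearMap.snd ℝ (Vec n) (Vec n) +
          (g'.comp (ContinuousLinearMap.fst ℝ (Vec n) (Vec n))).smulRight w.2)) w := by
  exact (hasFDerivAt_fst).prodMk ((hg.comp w (hasFDerivAt_fst)).smul (hasFDerivAt_snd))

/-- Divergence as the sum of diagonal entries of the derivative. -/
lemma divergence_eq_sum {n : ℕ} {Y1 Y2 : Phase n → Vec n}
    {L1 L2 : Fin n → (Phase n →L[ℝ] ℝ)} {z : Phase n}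
    (h1 : ∀ i, HasFDerivAt (fun w => Y1 w i) (L1 i) z)
    (h2 : ∀ i, HasFDerivAt (fun w => Y2 w i) (L2 i) z) :
    divergence (fun w => (Y1 w, Y2 w)) z
      = ∑ i, L1 i (Pi.single i 1, 0) + ∑ i, L2 i (0, Pi.single i 1) := by
  have hY : HasFDerivAt (fun w => (Y1 w, Y2 w))
      ((ContinuousLinearMap.pi L1).prod (ContinuousLinearMap.pi L2)) z :=
    (hasFDerivAt_pi.2 h1).prodMk (hasFDerivAt_pi.2 h2)
  rw [divergence, hY.fderiv]
  set b := (Pi.basisFun ℝ (Fin n)).prod (Pi.basisFun ℝ (Fin n)) with hb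
  rw [LinearMap.trace_eq_matrix_trace ℝ b, Matrix.trace]
  have hbl : ∀ i, b (Sum.inl i) = ((Pi.single i 1 : Vec n), (0 : Vec n)) := fun i =>
    Prod.ext (by simp [hb]) (by simp [hb])
  have hbr : ∀ i, b (Sum.inr i) = ((0 : Vec n), (Pi.single i 1 : Vec n)) := fun i =>
    Prod.ext (by simp [hb]) (by simp [hb])
  simp [Matrix.diag, LinearMap.toMatrix_apply, Fintype.sum_sum_type, hbl, hbr, hb,
    Module.Basis.prod_repr_inl, Module.Basis.prod_repr_inr, Pi.basisFun_repr, LinearMap.pi_apply,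
    ContinuousLinearMap.prod_apply, ContinuousLinearMap.pi_apply]

end AuxiliaryLemmas

/-- A fiber-linear semibasic two-form on phase space: a smooth assignment
`z ↦ Ξ_z` of alternating bilinear forms whose value depends only on the base
components of its arguments, and which is linear in the fiber variable `p`. -/


structure FiberLinearSemibasicTwoForm (n : ℕ) where
  form : Phase n → Phase n → Phase n → ℝ
  smooth : ∀ u v : Phase n, ContDiff ℝ (⊤ : ℕ∞) fun z => form z u v
  alt : ∀ z u v : Phase n, form z u v = - form z v u
  add_left : ∀ (z u u' v : Phase n), form z (u + u') v = form z u v + form z u' v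
  smul_left : ∀ (z : Phase n) (c : ℝ) (u v : Phase n), form z (c • u) v = c * form z u v
  semibasic : ∀ (z u v u' v' : Phase n), u.1 = u'.1 → v.1 = v'.1 → form z u v = form z u' v'
  fiber_add : ∀ (q p p' : Vec n) (u v : Phase n),
    form (q, p + p') u v = form (q, p) u v + form (q, p') u v
  fiber_smul : ∀ (q : Vec n) (c : ℝ) (p : Vec n) (u v : Phase n),
    form (q, c • p) u v = c * form (q, p) u v

set_option maxHeartbeats 2000000

theorem statement5 (n : ℕ) (hn : 1 ≤ n) (X : Phase n → Phase n) (H : Phase n → ℝ)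
    (Ξ : FiberLinearSemibasicTwoForm n) (f : Vec n → ℝ)
    (hX : ContDiff ℝ (⊤ : ℕ∞) X) (hH : ContDiff ℝ (⊤ : ℕ∞) H)
    (hf : ContDiff ℝ (⊤ : ℕ∞) f) (hf0 : ∀ q, f q ≠ 0)
    (heq : ∀ (z v : Phase n), Omega (X z) v - Ξ.form z (X z) v = fderiv ℝ H z v)
    (hsuff : ∀ (z u v : Phase n), dfTheta f z u v = f z.1 * Ξ.form z u v) :
    (∀ (z v : Phase n),
        Omega (ChapRescale f X z) v = fderiv ℝ (fun w => H (PsiInv f w)) z v)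
      ∧ (∀ z : Phase n, divergence (fun w => f w.1 ^ (n - 1) • X w) z = 0) := by
  constructor
  · -- Hamiltonization of the rescaled field
      have hfd : Differentiable ℝ f := hf.differentiable (by simp)
      have hHd : Differentiable ℝ H := hH.differentiable (by simp)
      have hXi : ∀ z u v, Ξ.form z u v = (f z.1)⁻¹ * dfTheta f z u v := by
        intro z u v; rw [hsuff, inv_mul_eq_div, mul_div_cancel_left₀ _ (hf0 z.1)]
      rintro ⟨q, p⟩ v
      have hfq := (hfd q).hasFDerivAt
      have hw : PsiInv f (q, p) = (q, (f q)⁻¹ • p) := rfl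
      have hPf := hasFDerivAt_Psi (w := ((q : Vec n), (f q)⁻¹ • p)) hfq
      have hCR : ChapRescale f X (q, p)
          = ((f q)⁻¹ • (X (q, (f q)⁻¹ • p)).1,
             (X (q, (f q)⁻¹ • p)).2
               + (((f q)⁻¹ * (f q)⁻¹) * fderiv ℝ f q ((X (q, (f q)⁻¹ • p)).1)) • p) := by
        show fderiv ℝ (Psi f) (PsiInv f (q,p)) ((f q)⁻¹ • X (PsiInv f (q,p))) = _
        rw [hw, hPf.fderiv]
        refine Prod.ext ?_ ?_
        · simp
        · funext i
          simp only [ContinuousLinearMap.prod_apply, ContinuousLinearMap.add_apply,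
            ContinuousLinearMap.coe_smul', Pi.smul_apply, ContinuousLinearMap.coe_snd',
            ContinuousLinearMap.smulRight_apply, ContinuousLinearMap.coe_comp', Function.comp_apply,
            ContinuousLinearMap.coe_fst', Prod.smul_snd, Prod.smul_fst, _root_.map_smul,
            smul_eq_mul, Pi.add_apply]
          rw [mul_add, ← mul_assoc, inv_mul_cancel₀ (hf0 q), one_mul]
          ring
      have hgi : HasFDerivAt (fun q => (f q)⁻¹) ((-(f q ^ 2)⁻¹) • (fderiv ℝ f q)) q := by
        exact (hasDerivAt_inv (hf0 q)).comp_hasFDerivAt q hfq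
      have hPIf := hasFDerivAt_Psi (w := ((q : Vec n), p)) hgi
      have hHw := (hHd (q, (f q)⁻¹ • p)).hasFDerivAt
      have hcomp := (hHw.comp ((q : Vec n), p) hPIf).fderiv
      have hfd1 : fderiv ℝ (fun w => H (PsiInv f w)) (q, p) v
          = fderiv ℝ H (q, (f q)⁻¹ • p)
              (v.1, (f q)⁻¹ • v.2 + -(((f q ^ 2)⁻¹ * fderiv ℝ f q v.1) • p)) := by
        rw [show (fun w => H (PsiInv f w)) = (H ∘ Psi fun q => (f q)⁻¹) from rfl, hcomp]
        simp
      rw [hCR, hfd1, ← heq _ _, hXi]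
      simp only [Omega, dfTheta]
      simp only [dotProduct_add, add_dotProduct, dotProduct_smul,
        smul_dotProduct, smul_eq_mul, _root_.map_smul, map_add, _root_.map_neg,
        dotProduct_neg, neg_dotProduct, dotProduct_zero,
        zero_dotProduct, map_zero]
      rw [dotProduct_comm ((X ((q : Vec n), (f q)⁻¹ • p)).1) p]
      field_simp [hf0 q]
      ring
  · -- measure invariance
      have hfd : Differentiable ℝ f := hf.differentiable (by simp)
      have hH2 : ContDiff ℝ 2 H := hH.of_le (WithTop.coe_le_coe.2 le_top)
      have hf2 : ContDiff ℝ 2 f := hf.of_le (WithTop.coe_le_coe.2 le_top)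
      have hH' : Differentiable ℝ (fderiv ℝ H) :=
        (hH2.fderiv_right (m := 1) (by norm_num)).differentiable one_ne_zero
      have hf' : Differentiable ℝ (fderiv ℝ f) :=
        (hf2.fderiv_right (m := 1) (by norm_num)).differentiable one_ne_zero
      have hsym : ∀ z u v', fderiv ℝ (fderiv ℝ H) z u v' = fderiv ℝ (fderiv ℝ H) z v' u :=
        fun z => hH2.contDiffAt.isSymmSndFDerivAt (by simp)
      have hXi : ∀ z u v, Ξ.form z u v = (f z.1)⁻¹ * dfTheta f z u v := by
        intro z u v; rw [hsuff, inv_mul_eq_div, mul_div_cancel_left₀ _ (hf0 z.1)]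
      have hA : ∀ z i, (X z).1 i = fderiv ℝ H z (0, Pi.single i 1) := by
        intro z i
        have h := heq z (0, Pi.single i 1)
        rw [hXi] at h
        simpa [Omega, dfTheta] using h
      have hB : ∀ z i, (X z).2 i = -(fderiv ℝ H z (Pi.single i 1, 0))
          - (f z.1)⁻¹ * ((∑ j, fderiv ℝ H z (0, Pi.single j 1) * fderiv ℝ f z.1 (Pi.single j 1)) * z.2 i
            - fderiv ℝ f z.1 (Pi.single i 1) * (∑ j, z.2 j * fderiv ℝ H z (0, Pi.single j 1))) := by
        intro z i
        have h := heq z (Pi.single i 1, 0)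
        rw [hXi] at h
        have hfx : fderiv ℝ f z.1 ((X z).1)
            = ∑ j, fderiv ℝ H z (0, Pi.single j 1) * fderiv ℝ f z.1 (Pi.single j 1) := by
          rw [clm_eq_sum]
          exact Finset.sum_congr rfl fun j _ => by rw [hA]
        have hdx : z.2 ⬝ᵥ (X z).1 = ∑ j, z.2 j * fderiv ℝ H z (0, Pi.single j 1) := by
          unfold dotProduct
          exact Finset.sum_congr rfl fun j _ => by rw [hA]
        simp only [Omega, dfTheta, dotProduct_zero, zero_dotProduct, map_zero,
          dotProduct_single, mul_one, zero_sub, zero_mul, hfx, hdx] at h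
        linarith [h]
      intro z
      have hfun : (fun w : Phase n => f w.1 ^ (n-1) • X w)
          = fun w : Phase n =>
            ((fun i => f w.1 ^ (n-1) * fderiv ℝ H w (0, Pi.single i 1)),
             (fun i => f w.1 ^ (n-1) * (-(fderiv ℝ H w (Pi.single i 1, 0))
               - (f w.1)⁻¹ * ((∑ j, fderiv ℝ H w (0, Pi.single j 1) * fderiv ℝ f w.1 (Pi.single j 1)) * w.2 i
                 - fderiv ℝ f w.1 (Pi.single i 1) * (∑ j, w.2 j * fderiv ℝ H w (0, Pi.single j 1)))))) := by
        funext w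
        refine Prod.ext ?_ ?_ <;> funext i
        · show f w.1 ^ (n-1) * (X w).1 i = _
          rw [hA]
        · show f w.1 ^ (n-1) * (X w).2 i = _
          rw [hB]
      rw [hfun]
      -- derivative pieces
      have hfc : HasFDerivAt (fun w : Phase n => f w.1)
          ((fderiv ℝ f z.1).comp (ContinuousLinearMap.fst ℝ (Vec n) (Vec n))) z :=
        (hfd z.1).hasFDerivAt.comp z hasFDerivAt_fst
      have hpow : HasFDerivAt (fun w : Phase n => f w.1 ^ (n-1))
          ((((n-1 : ℕ) : ℝ) * f z.1 ^ (n-1-1)) •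
            ((fderiv ℝ f z.1).comp (ContinuousLinearMap.fst ℝ (Vec n) (Vec n)))) z := by
        exact (hasDerivAt_pow (n-1) (f z.1)).comp_hasFDerivAt z hfc
      have hinv : HasFDerivAt (fun w : Phase n => (f w.1)⁻¹)
          (-((f z.1 ^ 2)⁻¹ •
            ((fderiv ℝ f z.1).comp (ContinuousLinearMap.fst ℝ (Vec n) (Vec n))))) z := by
        have h := (hasDerivAt_inv (hf0 z.1)).comp_hasFDerivAt z hfc
        rw [neg_smul] at h
        exact h
      have hEvH : ∀ v' : Phase n, HasFDerivAt (fun w => fderiv ℝ H w v')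
          ((ContinuousLinearMap.apply ℝ ℝ v').comp (fderiv ℝ (fderiv ℝ H) z)) z :=
        fun v' => (ContinuousLinearMap.apply ℝ ℝ v').hasFDerivAt.comp z (hH' z).hasFDerivAt
      have hEvf : ∀ v' : Vec n, HasFDerivAt (fun w : Phase n => fderiv ℝ f w.1 v')
          ((((ContinuousLinearMap.apply ℝ ℝ v').comp (fderiv ℝ (fderiv ℝ f) z.1))).comp
            (ContinuousLinearMap.fst ℝ (Vec n) (Vec n))) z :=
        fun v' => ((ContinuousLinearMap.apply ℝ ℝ v').hasFDerivAt.comp z.1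
          (hf' z.1).hasFDerivAt).comp z hasFDerivAt_fst
      have hpi : ∀ i : Fin n, HasFDerivAt (fun w : Phase n => w.2 i)
          ((ContinuousLinearMap.proj i).comp (ContinuousLinearMap.snd ℝ (Vec n) (Vec n))) z :=
        fun i => ((ContinuousLinearMap.proj (R := ℝ) (φ := fun _ : Fin n => ℝ) i).comp
          (ContinuousLinearMap.snd ℝ (Vec n) (Vec n))).hasFDerivAt
      have hS := HasFDerivAt.fun_sum (u := Finset.univ)
        (fun j _ => (hEvH ((0 : Vec n), Pi.single j 1)).fun_mul (hEvf (Pi.single j 1)))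
      have hR := HasFDerivAt.fun_sum (u := Finset.univ)
        (fun j _ => (hpi j).fun_mul (hEvH ((0 : Vec n), Pi.single j 1)))
      have h1 := fun i : Fin n => hpow.fun_mul (hEvH ((0 : Vec n), Pi.single i 1))
      have h2 := fun i : Fin n => hpow.fun_mul
        (((hEvH (Pi.single i 1, (0 : Vec n))).fun_neg).fun_sub
          (hinv.fun_mul ((hS.fun_mul (hpi i)).fun_sub ((hEvf (Pi.single i 1)).fun_mul hR))))
      rw [divergence_eq_sum h1 h2]
      simp only [ContinuousLinearMap.add_apply, ContinuousLinearMap.coe_smul', Pi.smul_apply,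
        ContinuousLinearMap.coe_comp', Function.comp_apply, ContinuousLinearMap.coe_fst',
        ContinuousLinearMap.coe_snd', ContinuousLinearMap.apply_apply, ContinuousLinearMap.proj_apply,
        ContinuousLinearMap.sum_apply, ContinuousLinearMap.coe_sub', Pi.sub_apply,
        ContinuousLinearMap.neg_apply, smul_eq_mul, map_zero, ContinuousLinearMap.zero_apply,
        Pi.single_eq_same, mul_zero, zero_mul, add_zero, zero_add, mul_one, Pi.single_apply,
        neg_zero, mul_ite, Finset.sum_add_distrib, Finset.sum_ite_eq', Finset.mem_univ, if_true,
        Finset.sum_const_zero]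
      have hsymm1 : ∀ x : Fin n, (fderiv ℝ (fderiv ℝ H) z) (Pi.single x 1, (0:Vec n)) ((0:Vec n), Pi.single x 1)
          = (fderiv ℝ (fderiv ℝ H) z) ((0:Vec n), Pi.single x 1) (Pi.single x 1, (0:Vec n)) :=
        fun x => hsym z _ _
      simp only [hsymm1]
      trans (∑ x : Fin n,
        ((↑(n-1) * f z.1 ^ (n-1-1)) * ((fderiv ℝ f z.1) (Pi.single x 1) * (fderiv ℝ H z) (0, Pi.single x 1))
        + (f z.1 ^ (n-1) * (f z.1)⁻¹) * ((fderiv ℝ f z.1) (Pi.single x 1) * (fderiv ℝ H z) (0, Pi.single x 1))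
        - (f z.1 ^ (n-1) * (f z.1)⁻¹) * (∑ i, (fderiv ℝ H z) (0, Pi.single i 1) * (fderiv ℝ f z.1) (Pi.single i 1))
        - (f z.1 ^ (n-1) * (f z.1)⁻¹) * (z.2 x * (∑ j, (fderiv ℝ f z.1) (Pi.single j 1) * ((fderiv ℝ (fderiv ℝ H) z) (0, Pi.single x 1)) (0, Pi.single j 1)))
        + (f z.1 ^ (n-1) * (f z.1)⁻¹) * ((fderiv ℝ f z.1) (Pi.single x 1) * (∑ j, z.2 j * ((fderiv ℝ (fderiv ℝ H) z) (0, Pi.single x 1)) (0, Pi.single j 1))))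
      )
      · rw [← Finset.sum_add_distrib, ← Finset.sum_add_distrib]
        refine Finset.sum_congr rfl fun x _ => ?_
        field_simp
        ring
      · simp only [Finset.sum_add_distrib, Finset.sum_sub_distrib, ← Finset.mul_sum,
          Finset.sum_const, Finset.card_univ, Fintype.card_fin, nsmul_eq_mul]
        have hTS : (∑ x : Fin n, (fderiv ℝ f z.1) (Pi.single x 1) * (fderiv ℝ H z) (0, Pi.single x 1))
            = ∑ i : Fin n, (fderiv ℝ H z) (0, Pi.single i 1) * (fderiv ℝ f z.1) (Pi.single i 1) :=
          Finset.sum_congr rfl fun x _ => mul_comm _ _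
        have hPQ : (∑ x : Fin n, (fderiv ℝ f z.1) (Pi.single x 1)
              * (∑ j, z.2 j * ((fderiv ℝ (fderiv ℝ H) z) (0, Pi.single x 1)) (0, Pi.single j 1)))
            = ∑ x : Fin n, z.2 x * (∑ j, (fderiv ℝ f z.1) (Pi.single j 1)
              * ((fderiv ℝ (fderiv ℝ H) z) (0, Pi.single x 1)) (0, Pi.single j 1)) := by
          have e1 : (∑ x : Fin n, (fderiv ℝ f z.1) (Pi.single x 1)
                * (∑ j, z.2 j * ((fderiv ℝ (fderiv ℝ H) z) (0, Pi.single x 1)) (0, Pi.single j 1)))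
              = ∑ x : Fin n, ∑ j : Fin n, (fderiv ℝ f z.1) (Pi.single x 1)
                * (z.2 j * ((fderiv ℝ (fderiv ℝ H) z) (0, Pi.single x 1)) (0, Pi.single j 1)) :=
            Finset.sum_congr rfl fun x _ => Finset.mul_sum _ _ _
          have e2 : (∑ x : Fin n, ∑ j : Fin n, (fderiv ℝ f z.1) (Pi.single x 1)
                * (z.2 j * ((fderiv ℝ (fderiv ℝ H) z) (0, Pi.single x 1)) (0, Pi.single j 1)))
              = ∑ j : Fin n, ∑ x : Fin n, (fderiv ℝ f z.1) (Pi.single x 1)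
                * (z.2 j * ((fderiv ℝ (fderiv ℝ H) z) (0, Pi.single x 1)) (0, Pi.single j 1)) :=
            Finset.sum_comm
          have e3 : (∑ j : Fin n, ∑ x : Fin n, (fderiv ℝ f z.1) (Pi.single x 1)
                * (z.2 j * ((fderiv ℝ (fderiv ℝ H) z) (0, Pi.single x 1)) (0, Pi.single j 1)))
              = ∑ x : Fin n, ∑ j : Fin n, (fderiv ℝ f z.1) (Pi.single j 1)
                * (z.2 x * ((fderiv ℝ (fderiv ℝ H) z) (0, Pi.single x 1)) (0, Pi.single j 1)) :=
            Finset.sum_congr rfl fun x _ => Finset.sum_congr rfl fun j _ => by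
              rw [hsym z (0, Pi.single j 1) (0, Pi.single x 1)]
          have e4 : (∑ x : Fin n, ∑ j : Fin n, (fderiv ℝ f z.1) (Pi.single j 1)
                * (z.2 x * ((fderiv ℝ (fderiv ℝ H) z) (0, Pi.single x 1)) (0, Pi.single j 1)))
              = ∑ x : Fin n, z.2 x * (∑ j, (fderiv ℝ f z.1) (Pi.single j 1)
                * ((fderiv ℝ (fderiv ℝ H) z) (0, Pi.single x 1)) (0, Pi.single j 1)) := by
            refine Finset.sum_congr rfl fun x _ => ?_
            rw [Finset.mul_sum]
            exact Finset.sum_congr rfl fun j _ => by ring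
          exact ((e1.trans e2).trans e3).trans e4
        rw [hTS, hPQ]
        have hc : (↑(n-1) : ℝ) * f z.1 ^ (n-1-1) + f z.1 ^ (n-1) * (f z.1)⁻¹
            = ↑n * (f z.1 ^ (n-1) * (f z.1)⁻¹) := by
          have key : ∀ (m : ℕ) (F : ℝ), F ≠ 0 →
              (↑m : ℝ) * F ^ (m-1) + F ^ m * F⁻¹ = (↑m + 1) * (F ^ m * F⁻¹) := by
            intro m F hF
            cases m with
            | zero => simp
            | succ l =>
              rw [Nat.succ_sub_one, pow_succ, mul_assoc, mul_inv_cancel₀ hF, mul_one]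
              push_cast; ring
          have h := key (n-1) (f z.1) (hf0 z.1)
          rw [Nat.cast_sub hn] at h
          push_cast [Nat.cast_sub hn] at h ⊢
          linear_combination h
        linear_combination
          (∑ i : Fin n, (fderiv ℝ H z) (0, Pi.single i 1) * (fderiv ℝ f z.1) (Pi.single i 1)) * hc
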